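/- arXiv:2307.13934 — 10 statements merged into one kernel-verified Lean document; each statement's English description precedes it below -/
import Mathlib

section
/- Let Ω ⊆ ℝ^d be a measurable set of finite measure, J : ℝ^d → ℝ an even, bounded, nonnegative measurable function, F : ℝ → ℝ continuously differentiable, and φ, η : Ω → ℝ bounded measurable functions. Define the nonlocal free energy E(φ) = (ε²/4) ∫_Ω ∫_Ω J(x-y)(φ(x)-φ(y))² dy dx + ∫_Ω F(φ(x)) dx for a constant ε > 0. Then lim_{θ→0} (E(φ+θη) - E(φ))/θ = ∫_Ω (ε² (Lφ)(x) + F'(φ(x))) η(x) dx, where (Lφ)(x) = ∫_Ω J(x-y)[φ(x)-φ(y)] dy. -/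
open MeasureTheory

private lemma bdd_integrable' {α : Type*} [MeasurableSpace α] {μ : Measure α}
    [IsFiniteMeasure μ] {f : α → ℝ} (hf : AEStronglyMeasurable f μ) {C : ℝ}
    (h : ∀ x, |f x| ≤ C) : Integrable f μ :=
  ⟨hf, HasFiniteIntegral.of_bounded (C := C)
    (Filter.Eventually.of_forall (by simpa [Real.norm_eq_abs] using h))⟩

private lemma abs_mul3' {a b c A B C : ℝ} (ha : |a| ≤ A) (hb : |b| ≤ B) (hc : |c| ≤ C) :
    |a * b * c| ≤ A * B * C := by
  have h1 : (0:ℝ) ≤ A := (abs_nonneg a).trans ha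
  have h2 : (0:ℝ) ≤ B := (abs_nonneg b).trans hb
  rw [abs_mul, abs_mul]
  exact mul_le_mul (mul_le_mul ha hb (abs_nonneg b) h1) hc (abs_nonneg c) (mul_nonneg h1 h2)

/-- the Gateaux derivative of the nonlocal free energy
`E(φ) = (ε²/4)∫∫ J(x-y)(φ(x)-φ(y))² + ∫ F(φ)` is
`∫ (ε² (Lφ)(x) + F'(φ(x))) η(x) dx` with `(Lφ)(x) = ∫_Ω J(x-y)(φ(x)-φ(y)) dy`. -/
theorem nonlocal_energy_gateaux_derivative {d : ℕ} (Ω : Set (Fin d → ℝ))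
    (hΩ : MeasurableSet Ω) (hΩfin : volume Ω < ⊤)
    (J : (Fin d → ℝ) → ℝ) (hJeven : ∀ x, J (-x) = J x)
    (hJbdd : ∃ C, ∀ x, |J x| ≤ C) (hJnn : ∀ x, 0 ≤ J x) (hJmeas : Measurable J)
    (F : ℝ → ℝ) (hF : ContDiff ℝ 1 F)
    (φ η : (Fin d → ℝ) → ℝ)
    (hφbdd : ∃ C, ∀ x, |φ x| ≤ C) (hφmeas : Measurable φ)
    (hηbdd : ∃ C, ∀ x, |η x| ≤ C) (hηmeas : Measurable η)
    (ε : ℝ) (hε : 0 < ε) :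
    Filter.Tendsto
      (fun θ : ℝ =>
        ((ε ^ 2 / 4 *
            ∫ x in Ω, ∫ y in Ω,
              J (x - y) * ((φ x + θ * η x) - (φ y + θ * η y)) ^ 2) +
          (∫ x in Ω, F (φ x + θ * η x)) -
          ((ε ^ 2 / 4 * ∫ x in Ω, ∫ y in Ω, J (x - y) * (φ x - φ y) ^ 2) +
            ∫ x in Ω, F (φ x))) / θ)
      (nhdsWithin 0 {(0 : ℝ)}ᶜ)
      (nhds (∫ x in Ω,
        (ε ^ 2 * (∫ y in Ω, J (x - y) * (φ x - φ y)) + deriv F (φ x)) * η x)) := by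
  obtain ⟨CJ, hCJ⟩ := hJbdd
  obtain ⟨Cφ, hCφ⟩ := hφbdd
  obtain ⟨Cη, hCη⟩ := hηbdd
  have hCJ0 : (0:ℝ) ≤ CJ := (abs_nonneg _).trans (hCJ 0)
  have hCφ0 : (0:ℝ) ≤ Cφ := (abs_nonneg _).trans (hCφ 0)
  have hCη0 : (0:ℝ) ≤ Cη := (abs_nonneg _).trans (hCη 0)
  set μ : Measure (Fin d → ℝ) := volume.restrict Ω with hμdef
  haveI : IsFiniteMeasure μ := ⟨by rw [hμdef, Measure.restrict_apply_univ]; exact hΩfin⟩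
  set P : Measure ((Fin d → ℝ) × (Fin d → ℝ)) := μ.prod μ with hPdef
  set l : Filter ℝ := nhdsWithin 0 {(0:ℝ)}ᶜ with hldef
  -- measurability on the product
  have mJ : Measurable fun z : (Fin d → ℝ) × (Fin d → ℝ) => J (z.1 - z.2) :=
    hJmeas.comp (measurable_fst.sub measurable_snd)
  have mu : Measurable fun z : (Fin d → ℝ) × (Fin d → ℝ) => φ z.1 - φ z.2 :=
    (hφmeas.comp measurable_fst).sub (hφmeas.comp measurable_snd)
  have mv : Measurable fun z : (Fin d → ℝ) × (Fin d → ℝ) => η z.1 - η z.2 :=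
    (hηmeas.comp measurable_fst).sub (hηmeas.comp measurable_snd)
  -- bounds
  have hu : ∀ z : (Fin d → ℝ) × (Fin d → ℝ), |φ z.1 - φ z.2| ≤ Cφ + Cφ :=
    fun z => (abs_sub _ _).trans (add_le_add (hCφ _) (hCφ _))
  have hv : ∀ z : (Fin d → ℝ) × (Fin d → ℝ), |η z.1 - η z.2| ≤ Cη + Cη :=
    fun z => (abs_sub _ _).trans (add_le_add (hCη _) (hCη _))
  -- integrability of the product-space integrands
  have iQ0 : Integrable (fun z : (Fin d → ℝ) × (Fin d → ℝ) =>
      J (z.1 - z.2) * (φ z.1 - φ z.2) ^ 2) P :=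
    bdd_integrable' ((mJ.mul (mu.pow_const 2)).aestronglyMeasurable)
      (C := CJ * ((Cφ + Cφ) * (Cφ + Cφ)))
      (fun z => by
        have := abs_mul3' (hCJ (z.1 - z.2)) (hu z) (hu z)
        calc |J (z.1 - z.2) * (φ z.1 - φ z.2) ^ 2|
            = |J (z.1 - z.2) * (φ z.1 - φ z.2) * (φ z.1 - φ z.2)| := by ring_nf
          _ ≤ CJ * (Cφ + Cφ) * (Cφ + Cφ) := this
          _ = CJ * ((Cφ + Cφ) * (Cφ + Cφ)) := by ring)
  have iQ1 : Integrable (fun z : (Fin d → ℝ) × (Fin d → ℝ) =>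
      J (z.1 - z.2) * ((φ z.1 - φ z.2) * (η z.1 - η z.2))) P :=
    bdd_integrable' ((mJ.mul (mu.mul mv)).aestronglyMeasurable)
      (C := CJ * (Cφ + Cφ) * (Cη + Cη))
      (fun z => by
        have := abs_mul3' (hCJ (z.1 - z.2)) (hu z) (hv z)
        calc |J (z.1 - z.2) * ((φ z.1 - φ z.2) * (η z.1 - η z.2))|
            = |J (z.1 - z.2) * (φ z.1 - φ z.2) * (η z.1 - η z.2)| := by ring_nf
          _ ≤ CJ * (Cφ + Cφ) * (Cη + Cη) := this)
  have iQ2 : Integrable (fun z : (Fin d → ℝ) × (Fin d → ℝ) =>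
      J (z.1 - z.2) * (η z.1 - η z.2) ^ 2) P :=
    bdd_integrable' ((mJ.mul (mv.pow_const 2)).aestronglyMeasurable)
      (C := CJ * (Cη + Cη) * (Cη + Cη))
      (fun z => by
        have := abs_mul3' (hCJ (z.1 - z.2)) (hv z) (hv z)
        calc |J (z.1 - z.2) * (η z.1 - η z.2) ^ 2|
            = |J (z.1 - z.2) * (η z.1 - η z.2) * (η z.1 - η z.2)| := by ring_nf
          _ ≤ CJ * (Cη + Cη) * (Cη + Cη) := this)
  have iJuη : Integrable (fun z : (Fin d → ℝ) × (Fin d → ℝ) =>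
      J (z.1 - z.2) * (φ z.1 - φ z.2) * η z.1) P :=
    bdd_integrable' ((mJ.mul mu).mul (hηmeas.comp measurable_fst) |>.aestronglyMeasurable)
      (C := CJ * (Cφ + Cφ) * Cη)
      (fun z => abs_mul3' (hCJ (z.1 - z.2)) (hu z) (hCη _))
  -- abbreviations for the three product integrals
  set Q0 : ℝ := ∫ z, J (z.1 - z.2) * (φ z.1 - φ z.2) ^ 2 ∂P with hQ0
  set Q1 : ℝ := ∫ z, J (z.1 - z.2) * ((φ z.1 - φ z.2) * (η z.1 - η z.2)) ∂P with hQ1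
  set Q2 : ℝ := ∫ z, J (z.1 - z.2) * (η z.1 - η z.2) ^ 2 ∂P with hQ2
  set R : ℝ := ∫ z, J (z.1 - z.2) * (φ z.1 - φ z.2) * η z.1 ∂P with hR
  -- base identity and quadratic expansion
  have hbase : (∫ x in Ω, ∫ y in Ω, J (x - y) * (φ x - φ y) ^ 2) = Q0 := by
    exact MeasureTheory.integral_integral (f := fun x y => J (x - y) * (φ x - φ y) ^ 2) iQ0
  have key : ∀ θ : ℝ,
      (∫ x in Ω, ∫ y in Ω, J (x - y) * ((φ x + θ * η x) - (φ y + θ * η y)) ^ 2)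
        = Q0 + θ * (2 * Q1) + θ ^ 2 * Q2 := by
    intro θ
    have hfun : (fun z : (Fin d → ℝ) × (Fin d → ℝ) =>
        J (z.1 - z.2) * ((φ z.1 + θ * η z.1) - (φ z.2 + θ * η z.2)) ^ 2)
        = fun z => J (z.1 - z.2) * (φ z.1 - φ z.2) ^ 2
            + θ * (2 * (J (z.1 - z.2) * ((φ z.1 - φ z.2) * (η z.1 - η z.2))))
            + θ ^ 2 * (J (z.1 - z.2) * (η z.1 - η z.2) ^ 2) := funext fun z => by ring
    have hint : Integrable (Function.uncurry fun x y =>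
        J (x - y) * ((φ x + θ * η x) - (φ y + θ * η y)) ^ 2) P := by
      have : Integrable (fun z : (Fin d → ℝ) × (Fin d → ℝ) =>
          J (z.1 - z.2) * (φ z.1 - φ z.2) ^ 2
            + θ * (2 * (J (z.1 - z.2) * ((φ z.1 - φ z.2) * (η z.1 - η z.2))))
            + θ ^ 2 * (J (z.1 - z.2) * (η z.1 - η z.2) ^ 2)) P :=
        (iQ0.add ((iQ1.const_mul 2).const_mul θ)).add (iQ2.const_mul (θ ^ 2))
      exact this.congr (Filter.Eventually.of_forall fun z => by
        simp only [Function.uncurry]; ring)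
    rw [MeasureTheory.integral_integral
      (f := fun x y => J (x - y) * ((φ x + θ * η x) - (φ y + θ * η y)) ^ 2) hint]
    have : (∫ z, J (z.1 - z.2) * ((φ z.1 + θ * η z.1) - (φ z.2 + θ * η z.2)) ^ 2 ∂P)
        = ∫ z, (J (z.1 - z.2) * (φ z.1 - φ z.2) ^ 2
            + θ * (2 * (J (z.1 - z.2) * ((φ z.1 - φ z.2) * (η z.1 - η z.2))))
            + θ ^ 2 * (J (z.1 - z.2) * (η z.1 - η z.2) ^ 2)) ∂P := by
      rw [hfun]
    have iB : Integrable (fun z : (Fin d → ℝ) × (Fin d → ℝ) =>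
        θ * (2 * (J (z.1 - z.2) * ((φ z.1 - φ z.2) * (η z.1 - η z.2))))) P :=
      (iQ1.const_mul 2).const_mul θ
    have iC : Integrable (fun z : (Fin d → ℝ) × (Fin d → ℝ) =>
        θ ^ 2 * (J (z.1 - z.2) * (η z.1 - η z.2) ^ 2)) P := iQ2.const_mul (θ ^ 2)
    have iAB : Integrable (fun z : (Fin d → ℝ) × (Fin d → ℝ) =>
        J (z.1 - z.2) * (φ z.1 - φ z.2) ^ 2
          + θ * (2 * (J (z.1 - z.2) * ((φ z.1 - φ z.2) * (η z.1 - η z.2))))) P := iQ0.add iB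
    rw [this, integral_add iAB iC, integral_add iQ0 iB, integral_const_mul,
      integral_const_mul, integral_const_mul]
  -- symmetry: Q1 = 2 R
  have hsym : Q1 = 2 * R := by
    have hfun : (fun z : (Fin d → ℝ) × (Fin d → ℝ) =>
        J (z.1 - z.2) * ((φ z.1 - φ z.2) * (η z.1 - η z.2)))
        = fun z => J (z.1 - z.2) * (φ z.1 - φ z.2) * η z.1
            - J (z.1 - z.2) * (φ z.1 - φ z.2) * η z.2 := funext fun z => by ring
    have iJuη2 : Integrable (fun z : (Fin d → ℝ) × (Fin d → ℝ) =>
        J (z.1 - z.2) * (φ z.1 - φ z.2) * η z.2) P :=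
      bdd_integrable' ((mJ.mul mu).mul (hηmeas.comp measurable_snd) |>.aestronglyMeasurable)
        (C := CJ * (Cφ + Cφ) * Cη)
        (fun z => abs_mul3' (hCJ (z.1 - z.2)) (hu z) (hCη _))
    have hswap : (∫ z, J (z.1 - z.2) * (φ z.1 - φ z.2) * η z.2 ∂P) = -R := by
      have h1 := MeasureTheory.integral_prod_swap
        (μ := μ) (ν := μ)
        (fun z : (Fin d → ℝ) × (Fin d → ℝ) => J (z.1 - z.2) * (φ z.1 - φ z.2) * η z.2)
      rw [← h1]
      have h2 : (fun z : (Fin d → ℝ) × (Fin d → ℝ) =>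
          J (z.swap.1 - z.swap.2) * (φ z.swap.1 - φ z.swap.2) * η z.swap.2)
          = fun z => -(J (z.1 - z.2) * (φ z.1 - φ z.2) * η z.1) := by
        funext z
        obtain ⟨x, y⟩ := z
        show J (y - x) * (φ y - φ x) * η x = -(J (x - y) * (φ x - φ y) * η x)
        rw [show y - x = -(x - y) from (neg_sub x y).symm, hJeven]
        ring
      calc (∫ z, J (z.swap.1 - z.swap.2) * (φ z.swap.1 - φ z.swap.2) * η z.swap.2 ∂P)
          = ∫ z, -(J (z.1 - z.2) * (φ z.1 - φ z.2) * η z.1) ∂P := by rw [h2]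
        _ = -R := by rw [integral_neg]
    rw [hQ1, hfun, integral_sub iJuη iJuη2, hswap]
    ring
  -- ==================== F part ====================
  set K : ℝ := Cφ + Cη with hKdef
  have hK0 : (0:ℝ) ≤ K := by positivity
  have hdiffF : Differentiable ℝ F := hF.differentiable one_ne_zero
  obtain ⟨M, hM⟩ := (isCompact_Icc (a := -K) (b := K)).exists_bound_of_continuousOn
    ((hF.continuous_deriv le_rfl).continuousOn)
  obtain ⟨MF, hMF⟩ := (isCompact_Icc (a := -K) (b := K)).exists_bound_of_continuousOn
    (hF.continuous.continuousOn)
  have hM0 : (0:ℝ) ≤ M := (norm_nonneg _).trans (hM 0 ⟨by linarith, hK0⟩)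
  have hmemφ : ∀ x, φ x ∈ Set.Icc (-K) K := fun x => by
    have h := abs_le.mp (hCφ x)
    exact ⟨by simp only [hKdef]; linarith [h.1], by simp only [hKdef]; linarith [h.2]⟩
  have hmem2 : ∀ θ : ℝ, |θ| ≤ 1 → ∀ x, φ x + θ * η x ∈ Set.Icc (-K) K := by
    intro θ hθ x
    have h1 : |θ * η x| ≤ Cη := by
      rw [abs_mul]
      calc |θ| * |η x| ≤ 1 * Cη :=
            mul_le_mul hθ (hCη x) (abs_nonneg _) zero_le_one
        _ = Cη := one_mul _
    have h2 : |φ x + θ * η x| ≤ K := by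
      calc |φ x + θ * η x| ≤ |φ x| + |θ * η x| := abs_add_le _ _
        _ ≤ Cφ + Cη := add_le_add (hCφ x) h1
    have := abs_le.mp h2
    exact ⟨this.1, this.2⟩
  have hMVT : ∀ θ : ℝ, |θ| ≤ 1 → ∀ x, |F (φ x + θ * η x) - F (φ x)| ≤ M * (|θ| * |η x|) := by
    intro θ hθ x
    have h := Convex.norm_image_sub_le_of_norm_deriv_le (𝕜 := ℝ) (f := F)
      (fun t _ => hdiffF t) (fun t ht => hM t ht)
      (convex_Icc (-K) K) (hmemφ x) (hmem2 θ hθ x)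
    simpa [Real.norm_eq_abs, add_sub_cancel_left, abs_mul] using h
  have hsmall : ∀ᶠ θ in l, |θ| ≤ 1 := by
    have h1 : ∀ᶠ θ : ℝ in nhds 0, |θ| ≤ 1 := by
      have hmem : Set.Icc (-1:ℝ) 1 ∈ nhds (0:ℝ) := Icc_mem_nhds (by norm_num) (by norm_num)
      filter_upwards [hmem] with θ hθ using abs_le.mpr hθ
    exact nhdsWithin_le_nhds h1
  have hne : ∀ᶠ θ in l, θ ≠ 0 := by
    have hmem := self_mem_nhdsWithin (a := (0:ℝ)) (s := {(0:ℝ)}ᶜ)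
    filter_upwards [hmem] with θ hθ using by simpa using hθ
  have hFmeasθ : ∀ θ : ℝ, AEStronglyMeasurable
      (fun x => (F (φ x + θ * η x) - F (φ x)) / θ) μ := fun θ =>
    (((hF.continuous.measurable.comp (hφmeas.add (hηmeas.const_mul θ))).sub
      (hF.continuous.measurable.comp hφmeas)).div_const θ).aestronglyMeasurable
  have h_bound : ∀ᶠ θ in l, ∀ᵐ x ∂μ,
      ‖(F (φ x + θ * η x) - F (φ x)) / θ‖ ≤ M * Cη := by
    filter_upwards [hsmall, hne] with θ hθ1 hθ0
    refine Filter.Eventually.of_forall fun x => ?_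
    have hθpos : 0 < |θ| := abs_pos.mpr hθ0
    rw [Real.norm_eq_abs, abs_div, div_le_iff₀ hθpos]
    calc |F (φ x + θ * η x) - F (φ x)| ≤ M * (|θ| * |η x|) := hMVT θ hθ1 x
      _ = M * |η x| * |θ| := by ring
      _ ≤ M * Cη * |θ| :=
          mul_le_mul_of_nonneg_right (mul_le_mul_of_nonneg_left (hCη x) hM0) (abs_nonneg θ)
  have h_lim : ∀ᵐ x ∂μ, Filter.Tendsto
      (fun θ : ℝ => (F (φ x + θ * η x) - F (φ x)) / θ) l (nhds (deriv F (φ x) * η x)) := by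
    refine Filter.Eventually.of_forall fun x => ?_
    have hg : HasDerivAt (fun θ : ℝ => φ x + θ * η x) (η x) 0 := by
      simpa using ((hasDerivAt_id (0:ℝ)).mul_const (η x)).const_add (φ x)
    have hc : HasDerivAt (fun θ : ℝ => F (φ x + θ * η x)) (deriv F (φ x) * η x) 0 := by
      have h := ((hdiffF (φ x + 0 * η x)).hasDerivAt).comp 0 hg
      simpa [Function.comp_def] using h
    have h := hasDerivAt_iff_tendsto_slope.mp hc
    refine h.congr fun θ => ?_
    simp [slope, div_eq_inv_mul]
  have hFpart : Filter.Tendsto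
      (fun θ : ℝ => ∫ x, (F (φ x + θ * η x) - F (φ x)) / θ ∂μ) l
      (nhds (∫ x, deriv F (φ x) * η x ∂μ)) :=
    tendsto_integral_filter_of_dominated_convergence (fun _ => M * Cη)
      (Filter.Eventually.of_forall hFmeasθ) h_bound (integrable_const _) h_lim
  have iFθ : ∀ θ : ℝ, |θ| ≤ 1 → Integrable (fun x => F (φ x + θ * η x)) μ := fun θ hθ =>
    bdd_integrable'
      ((hF.continuous.measurable.comp (hφmeas.add (hηmeas.const_mul θ))).aestronglyMeasurable)
      (C := MF) (fun x => by simpa [Real.norm_eq_abs] using hMF _ (hmem2 θ hθ x))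
  have iF0 : Integrable (fun x => F (φ x)) μ :=
    bdd_integrable' ((hF.continuous.measurable.comp hφmeas).aestronglyMeasurable)
      (C := MF) (fun x => by simpa [Real.norm_eq_abs] using hMF _ (hmemφ x))
  -- ==================== eventual equality ====================
  have hEq : ∀ᶠ θ in l,
      ((ε ^ 2 / 4 *
          ∫ x in Ω, ∫ y in Ω, J (x - y) * ((φ x + θ * η x) - (φ y + θ * η y)) ^ 2) +
        (∫ x in Ω, F (φ x + θ * η x)) -
        ((ε ^ 2 / 4 * ∫ x in Ω, ∫ y in Ω, J (x - y) * (φ x - φ y) ^ 2) +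
          ∫ x in Ω, F (φ x))) / θ
      = ε ^ 2 / 4 * (2 * Q1 + θ * Q2) + ∫ x, (F (φ x + θ * η x) - F (φ x)) / θ ∂μ := by
    filter_upwards [hsmall, hne] with θ hθ1 hθ0
    have hFint : (∫ x, (F (φ x + θ * η x) - F (φ x)) / θ ∂μ)
        = ((∫ x, F (φ x + θ * η x) ∂μ) - ∫ x, F (φ x) ∂μ) / θ := by
      rw [integral_div, integral_sub (iFθ θ hθ1) iF0]
    rw [key θ, hbase, hFint]
    field_simp
    ring
  -- ==================== limits ====================
  have hquadlim : Filter.Tendsto (fun θ : ℝ => ε ^ 2 / 4 * (2 * Q1 + θ * Q2)) l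
      (nhds (ε ^ 2 / 4 * (2 * Q1 + 0 * Q2))) := by
    have hc : Continuous (fun θ : ℝ => ε ^ 2 / 4 * (2 * Q1 + θ * Q2)) :=
      continuous_const.mul (continuous_const.add (continuous_id.mul continuous_const))
    exact (hc.tendsto 0).mono_left nhdsWithin_le_nhds
  have htot := hquadlim.add hFpart
  -- ==================== final value identification ====================
  have iL : Integrable (fun x => (∫ y in Ω, J (x - y) * (φ x - φ y)) * η x) μ := by
    have hSM : StronglyMeasurable (fun x => ∫ y, J (x - y) * (φ x - φ y) ∂μ) :=
      StronglyMeasurable.integral_prod_right'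
        (f := fun z : (Fin d → ℝ) × (Fin d → ℝ) => J (z.1 - z.2) * (φ z.1 - φ z.2))
        (mJ.mul mu).stronglyMeasurable
    refine bdd_integrable' ((hSM.mul hηmeas.stronglyMeasurable).aestronglyMeasurable)
      (C := CJ * (Cφ + Cφ) * (μ Set.univ).toReal * Cη) (fun x => ?_)
    have h1 : ‖∫ y, J (x - y) * (φ x - φ y) ∂μ‖ ≤ CJ * (Cφ + Cφ) * (μ Set.univ).toReal :=
      norm_integral_le_of_norm_le_const (Filter.Eventually.of_forall fun y => by
        rw [Real.norm_eq_abs, abs_mul]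
        exact mul_le_mul (hCJ _) (hu (x, y)) (abs_nonneg _) ((abs_nonneg _).trans (hCJ 0)))
    rw [abs_mul]
    exact mul_le_mul (by simpa [Real.norm_eq_abs] using h1) (hCη x) (abs_nonneg _)
      (mul_nonneg (mul_nonneg hCJ0 (by linarith)) ENNReal.toReal_nonneg)
  have iF'η : Integrable (fun x => deriv F (φ x) * η x) μ := by
    refine bdd_integrable'
      ((((hF.continuous_deriv le_rfl).measurable.comp hφmeas).mul hηmeas).aestronglyMeasurable)
      (C := M * Cη) (fun x => ?_)
    rw [abs_mul]
    exact mul_le_mul (by simpa [Real.norm_eq_abs] using hM _ (hmemφ x)) (hCη x)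
      (abs_nonneg _) hM0
  have hLR : (∫ x, (∫ y in Ω, J (x - y) * (φ x - φ y)) * η x ∂μ) = R := by
    have h1 : ∀ x, (∫ y, J (x - y) * (φ x - φ y) ∂μ) * η x
        = ∫ y, J (x - y) * (φ x - φ y) * η x ∂μ := fun x =>
      (integral_mul_const (η x) (fun y => J (x - y) * (φ x - φ y))).symm
    calc (∫ x, (∫ y, J (x - y) * (φ x - φ y) ∂μ) * η x ∂μ)
        = ∫ x, ∫ y, J (x - y) * (φ x - φ y) * η x ∂μ ∂μ := by
          exact integral_congr_ae (Filter.Eventually.of_forall fun x => h1 x)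
      _ = R := MeasureTheory.integral_integral
          (f := fun x y => J (x - y) * (φ x - φ y) * η x) iJuη
  have hfinal : (∫ x in Ω,
      (ε ^ 2 * (∫ y in Ω, J (x - y) * (φ x - φ y)) + deriv F (φ x)) * η x)
      = ε ^ 2 / 4 * (2 * Q1 + 0 * Q2) + ∫ x, deriv F (φ x) * η x ∂μ := by
    have h1 : (fun x => (ε ^ 2 * (∫ y in Ω, J (x - y) * (φ x - φ y)) + deriv F (φ x)) * η x)
        = fun x => ε ^ 2 * ((∫ y in Ω, J (x - y) * (φ x - φ y)) * η x)
            + deriv F (φ x) * η x := funext fun x => by ring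
    have iLc : Integrable
        (fun x => ε ^ 2 * ((∫ y in Ω, J (x - y) * (φ x - φ y)) * η x)) μ :=
      iL.const_mul (ε ^ 2)
    calc (∫ x, (ε ^ 2 * (∫ y in Ω, J (x - y) * (φ x - φ y)) + deriv F (φ x)) * η x ∂μ)
        = ∫ x, (ε ^ 2 * ((∫ y in Ω, J (x - y) * (φ x - φ y)) * η x)
            + deriv F (φ x) * η x) ∂μ := by rw [h1]
      _ = ε ^ 2 * (∫ x, (∫ y in Ω, J (x - y) * (φ x - φ y)) * η x ∂μ)
            + ∫ x, deriv F (φ x) * η x ∂μ := by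
          rw [integral_add iLc iF'η, integral_const_mul]
      _ = ε ^ 2 * R + ∫ x, deriv F (φ x) * η x ∂μ := by rw [hLR]
      _ = ε ^ 2 / 4 * (2 * Q1 + 0 * Q2) + ∫ x, deriv F (φ x) * η x ∂μ := by
          rw [hsym]; ring
  rw [hfinal]
  exact Filter.Tendsto.congr' (Filter.EventuallyEq.symm hEq) htot
end

section
/- Let β > 0 and let f : ℝ → ℝ be continuously differentiable on [-β, β] with f(β) ≤ 0 ≤ f(-β). If κ is a constant with κ ≥ max_{ξ ∈ [-β,β]} |f'(ξ)|, then |f(ξ) + κξ| ≤ κβ for all ξ ∈ [-β, β]. -/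
/-- Lemma 2: if `f` is continuously differentiable on `[-β, β]`
with `f(β) ≤ 0 ≤ f(-β)` and `κ ≥ max_{ξ∈[-β,β]} |f'(ξ)|`, then
`|f(ξ) + κξ| ≤ κβ` for all `ξ ∈ [-β, β]`. -/
theorem stabilized_nonlinearity_bound (β : ℝ) (hβ : 0 < β)
    (f f' : ℝ → ℝ)
    (hderiv : ∀ ξ ∈ Set.Icc (-β) β,
      HasDerivWithinAt f (f' ξ) (Set.Icc (-β) β) ξ)
    (hf'cont : ContinuousOn f' (Set.Icc (-β) β))
    (hfβ : f β ≤ 0) (hfmβ : 0 ≤ f (-β))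
    (κ : ℝ) (hκ : ∀ ξ ∈ Set.Icc (-β) β, |f' ξ| ≤ κ) :
    ∀ ξ ∈ Set.Icc (-β) β, |f ξ + κ * ξ| ≤ κ * β := by
  set D := Set.Icc (-β) β with hD
  have hmono : MonotoneOn (fun x => f x + κ * x) D := by
    apply monotoneOn_of_hasDerivWithinAt_nonneg (convex_Icc _ _)
      (f' := fun x => f' x + κ)
    · exact ContinuousOn.add (fun x hx => (hderiv x hx).continuousWithinAt)
        (by fun_prop)
    · intro x hx
      have hx' : x ∈ D := interior_subset hx
      exact (((hderiv x hx').mono interior_subset).add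
        ((hasDerivWithinAt_id x _).const_mul κ)).congr_deriv (by ring)
    · intro x hx
      have hx' : x ∈ D := interior_subset hx
      have := hκ x hx'
      have := abs_le.mp this
      linarith [this.1]
  intro ξ hξ
  have hmem_b : β ∈ D := by constructor <;> linarith
  have hmem_mb : (-β) ∈ D := by constructor <;> linarith
  have h1 : f ξ + κ * ξ ≤ f β + κ * β := hmono hξ hmem_b hξ.2
  have h2 : f (-β) + κ * (-β) ≤ f ξ + κ * ξ := hmono hmem_mb hξ hξ.1
  rw [abs_le]
  constructor <;> nlinarith
end

section
/- Let β > 0 and let f : ℝ → ℝ be continuously differentiable on [-β, β] with f(β) ≤ 0 ≤ f(-β), and let κ ≥ max_{ξ ∈ [-β,β]} |f'(ξ)|. Let τ > 0, g > 0, and let φ ∈ ℝ^M satisfy ‖φ‖_∞ ≤ β, where ‖u‖_∞ = max_i |u_i|. Then the vector v ∈ ℝ^M with components v_i = (1/τ) φ_i + g (f(φ_i) + κ φ_i) satisfies ‖v‖_∞ ≤ (1/τ + κ g) β. -/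
/-- right-hand-side bound of the sESAV1 scheme. If `‖φ‖_∞ ≤ β`
then the vector with components `(1/τ)φ_i + g(f(φ_i) + κφ_i)` has sup-norm at
most `(1/τ + κg)β`.  Here `‖·‖` on `Fin M → ℝ` is the sup-norm. -/
theorem sESAV1_rhs_sup_norm_bound {M : ℕ} (β : ℝ) (hβ : 0 < β)
    (f f' : ℝ → ℝ)
    (hderiv : ∀ ξ ∈ Set.Icc (-β) β,
      HasDerivWithinAt f (f' ξ) (Set.Icc (-β) β) ξ)
    (hf'cont : ContinuousOn f' (Set.Icc (-β) β))
    (hfβ : f β ≤ 0) (hfmβ : 0 ≤ f (-β))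
    (κ : ℝ) (hκ : ∀ ξ ∈ Set.Icc (-β) β, |f' ξ| ≤ κ)
    (τ g : ℝ) (hτ : 0 < τ) (hg : 0 < g)
    (φ : Fin M → ℝ) (hφ : ‖φ‖ ≤ β) :
    ‖(fun i => (1 / τ) * φ i + g * (f (φ i) + κ * φ i) : Fin M → ℝ)‖ ≤
      (1 / τ + κ * g) * β := by
  have hβmem : β ∈ Set.Icc (-β) β := ⟨by linarith, le_refl β⟩
  have hmβmem : (-β) ∈ Set.Icc (-β) β := ⟨le_refl _, by linarith⟩
  have hκ0 : 0 ≤ κ := le_trans (abs_nonneg _) (hκ β hβmem)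
  set h : ℝ → ℝ := fun x => f x + κ * x with hh
  -- h is monotone on [-β, β]
  have hcontf : ContinuousOn f (Set.Icc (-β) β) := fun x hx =>
    (hderiv x hx).continuousWithinAt
  have hconth : ContinuousOn h (Set.Icc (-β) β) := by
    exact hcontf.add ((continuousOn_const).mul continuousOn_id)
  have hmono : MonotoneOn h (Set.Icc (-β) β) := by
    have hconv : Convex ℝ (Set.Icc (-β) β) := convex_Icc _ _
    apply monotoneOn_of_deriv_nonneg hconv hconth
    · intro x hx
      rw [interior_Icc] at hx
      have hx' : x ∈ Set.Icc (-β) β := Set.mem_Icc_of_Ioo hx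
      have hda : HasDerivAt h (f' x + κ) x := by
        have := (hderiv x hx').hasDerivAt (Icc_mem_nhds hx.1 hx.2)
        exact (by simpa using this.add ((hasDerivAt_id x).const_mul κ) : HasDerivAt (f + fun y => κ * y) (f' x + κ) x)
      exact hda.differentiableAt.differentiableWithinAt
    · intro x hx
      rw [interior_Icc] at hx
      have hx' : x ∈ Set.Icc (-β) β := Set.mem_Icc_of_Ioo hx
      have hda : HasDerivAt h (f' x + κ) x := by
        have := (hderiv x hx').hasDerivAt (Icc_mem_nhds hx.1 hx.2)
        exact (by simpa using this.add ((hasDerivAt_id x).const_mul κ) : HasDerivAt (f + fun y => κ * y) (f' x + κ) x)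
      rw [hda.deriv]
      have := abs_le.mp (hκ x hx')
      linarith
  have hbound : ∀ x ∈ Set.Icc (-β) β, |h x| ≤ κ * β := by
    intro x hx
    rw [abs_le]
    constructor
    · have := hmono hmβmem hx hx.1
      simp only [hh] at this ⊢
      nlinarith
    · have := hmono hx hβmem hx.2
      simp only [hh] at this ⊢
      nlinarith
  have hnn : 0 ≤ (1 / τ + κ * g) * β := by positivity
  rw [pi_norm_le_iff_of_nonneg hnn]
  intro i
  have hφi : |φ i| ≤ β := le_trans (norm_le_pi_norm φ i) hφ
  have hφimem : φ i ∈ Set.Icc (-β) β := abs_le.mp hφi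
  have h1 : |(1 / τ) * φ i| ≤ (1 / τ) * β := by
    rw [abs_mul, abs_of_pos (by positivity : (0:ℝ) < 1 / τ)]
    exact mul_le_mul_of_nonneg_left hφi (by positivity)
  have h2 : |g * h (φ i)| ≤ g * (κ * β) := by
    rw [abs_mul, abs_of_pos hg]
    exact mul_le_mul_of_nonneg_left (hbound _ hφimem) hg.le
  calc ‖(1 / τ) * φ i + g * (f (φ i) + κ * φ i)‖
      = |(1 / τ) * φ i + g * h (φ i)| := by simp [hh]
    _ ≤ |(1 / τ) * φ i| + |g * h (φ i)| := abs_add_le _ _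
    _ ≤ (1 / τ) * β + g * (κ * β) := add_le_add h1 h2
    _ = (1 / τ + κ * g) * β := by ring
end

section
/- (Energy dissipation of sESAV1.) Let L : Matrix (Fin M) (Fin M) ℝ be symmetric and positive semi-definite, w > 0 a weight, ⟨u,v⟩ = w ∑_i u_i v_i the discrete inner product with norm ‖u‖ = √⟨u,u⟩, F : ℝ → ℝ, f = -F', ε ∈ ℝ, τ > 0 and κ ≥ 0. Given φⁿ ∈ ℝ^M and sⁿ ∈ ℝ, set E₁h(ω) = w ∑_i F(ω_i) and g = exp(sⁿ)/exp(E₁h(φⁿ)), and suppose φⁿ⁺¹ ∈ ℝ^M and sⁿ⁺¹ ∈ ℝ satisfy the sESAV1 scheme: (φⁿ⁺¹ - φⁿ)/τ = -ε²(L φⁿ⁺¹) + g f(φⁿ) - κ g (φⁿ⁺¹ - φⁿ) componentwise (f applied componentwise), and (sⁿ⁺¹ - sⁿ)/τ = -g ⟨f(φⁿ), (φⁿ⁺¹ - φⁿ)/τ⟩. Then the modified discrete energy Ē_h(φ,s) = (ε²/2)⟨Lφ, φ⟩ + s satisfies Ē_h(φⁿ⁺¹, sⁿ⁺¹) ≤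 Ē_h(φⁿ, sⁿ). -/
open Matrix

/-- Energy dissipation of sESAV1: the first-order sESAV scheme
is unconditionally energy stable with respect to the modified discrete energy
`Ē_h(φ,s) = (ε²/2)⟨Lφ,φ⟩ + s`, where `⟨u,v⟩ = w ∑_i u_i v_i` and `f = -F'`. -/
theorem sESAV1_energy_dissipation {M : ℕ}
    (L : Matrix (Fin M) (Fin M) ℝ) (hL : L.PosSemidef)
    (w : ℝ) (hw : 0 < w)
    (F : ℝ → ℝ) (ε τ κ : ℝ) (hτ : 0 < τ) (hκ : 0 ≤ κ)
    (φn φn1 : Fin M → ℝ) (sn sn1 : ℝ) (g : ℝ)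
    (hg : g = Real.exp sn / Real.exp (w * ∑ i, F (φn i)))
    (hscheme : ∀ i, (φn1 i - φn i) / τ =
      -(ε ^ 2) * L.mulVec φn1 i + g * (-(deriv F (φn i)))
        - κ * g * (φn1 i - φn i))
    (hsscheme : (sn1 - sn) / τ =
      -g * (w * ∑ i, (-(deriv F (φn i))) * ((φn1 i - φn i) / τ))) :
    ε ^ 2 / 2 * (w * ∑ i, L.mulVec φn1 i * φn1 i) + sn1 ≤
      ε ^ 2 / 2 * (w * ∑ i, L.mulVec φn i * φn i) + sn := by
  set e : Fin M → ℝ := fun i => φn1 i - φn i with he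
  have hgpos : 0 < g := by rw [hg]; positivity
  -- abbreviations
  set S : ℝ := ∑ i, e i * e i with hS
  set A : ℝ := ∑ i, L.mulVec φn1 i * e i with hA
  set P : ℝ := ∑ i, (-(deriv F (φn i))) * e i with hP
  set Q : ℝ := ∑ i, L.mulVec e i * e i with hQ
  -- symmetry of the bilinear form
  have hsymm : ∀ u v : Fin M → ℝ, (∑ i, L.mulVec u i * v i) = ∑ i, L.mulVec v i * u i := by
    intro u v
    have h1 : (∑ i, L.mulVec u i * v i) = L.mulVec u ⬝ᵥ v := rfl
    have h2 : (∑ i, L.mulVec v i * u i) = L.mulVec v ⬝ᵥ u := rfl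
    rw [h1, h2, dotProduct_comm, Matrix.dotProduct_mulVec, ← Matrix.mulVec_transpose]
    have : Lᵀ = L := by
      have := hL.1
      simpa [Matrix.IsHermitian, Matrix.conjTranspose_eq_transpose_of_trivial] using this
    rw [this, dotProduct_comm]
  -- S, Q nonneg
  have hSnn : 0 ≤ S := Finset.sum_nonneg fun i _ => mul_self_nonneg _
  have hQnn : 0 ≤ Q := by
    have := hL.dotProduct_mulVec_nonneg e
    have heq : e ⬝ᵥ L.mulVec e = Q := by
      rw [hQ]; simp [dotProduct, mul_comm]
    simp only [star_trivial, RCLike.re_to_real] at this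
    linarith [heq ▸ this]
  -- key identity from the scheme: S/τ = -ε² A + g P - κ g S
  have hkey : S / τ = -(ε ^ 2) * A + g * P - κ * g * S := by
    have h1 : ∀ i, e i * e i / τ =
        -(ε ^ 2) * (L.mulVec φn1 i * e i) + g * ((-(deriv F (φn i))) * e i)
          - κ * g * (e i * e i) := by
      intro i
      have := hscheme i
      have h2 : e i / τ * e i =
          (-(ε ^ 2) * L.mulVec φn1 i + g * (-(deriv F (φn i))) - κ * g * e i) * e i := by
        rw [← this]
      calc e i * e i / τ = e i / τ * e i := by ring
        _ = _ := by rw [h2]; ring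
    calc S / τ = ∑ i, e i * e i / τ := by rw [hS, Finset.sum_div]
      _ = ∑ i, (-(ε ^ 2) * (L.mulVec φn1 i * e i) + g * ((-(deriv F (φn i))) * e i)
            - κ * g * (e i * e i)) := Finset.sum_congr rfl fun i _ => h1 i
      _ = -(ε ^ 2) * A + g * P - κ * g * S := by
          rw [hA, hP, hS]
          simp [Finset.sum_sub_distrib, Finset.sum_add_distrib, Finset.mul_sum]
  -- s update: sn1 - sn = -g * w * P
  have hsn : sn1 - sn = -g * (w * P) := by
    have h1 : (∑ i, (-(deriv F (φn i))) * ((φn1 i - φn i) / τ)) = P / τ := by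
      rw [hP, Finset.sum_div]
      exact Finset.sum_congr rfl fun i _ => by rw [he]; ring
    have h2 := hsscheme
    rw [h1] at h2
    field_simp [hτ.ne'] at h2
    linear_combination h2
  -- energy difference identity: ⟨Lφ¹,φ¹⟩ - ⟨Lφ⁰,φ⁰⟩ = 2A - Q
  have hdiff : (∑ i, L.mulVec φn1 i * φn1 i) - (∑ i, L.mulVec φn i * φn i) = 2 * A - Q := by
    have hlin : ∀ i, L.mulVec e i = L.mulVec φn1 i - L.mulVec φn i := by
      intro i
      rw [he]
      have : e = φn1 - φn := rfl
      rw [show (fun i => φn1 i - φn i) = φn1 - φn from rfl, Matrix.mulVec_sub]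
      rfl
    have hc : (∑ i, L.mulVec φn1 i * φn i) = ∑ i, L.mulVec φn i * φn1 i := hsymm φn1 φn
    have hAex : A = (∑ i, L.mulVec φn1 i * φn1 i) - ∑ i, L.mulVec φn1 i * φn i := by
      rw [hA, ← Finset.sum_sub_distrib]
      exact Finset.sum_congr rfl fun i _ => by rw [he]; ring
    have hQex : Q = (∑ i, L.mulVec φn1 i * φn1 i) - (∑ i, L.mulVec φn1 i * φn i)
        - (∑ i, L.mulVec φn i * φn1 i) + ∑ i, L.mulVec φn i * φn i := by
      rw [hQ]
      have : ∀ i, L.mulVec e i * e i =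
          L.mulVec φn1 i * φn1 i - L.mulVec φn1 i * φn i
            - L.mulVec φn i * φn1 i + L.mulVec φn i * φn i := by
        intro i; rw [hlin i, he]; ring
      rw [Finset.sum_congr rfl fun i _ => this i]
      simp [Finset.sum_sub_distrib, Finset.sum_add_distrib]
    rw [hAex] at *
    rw [hQex]
    linarith [hc]
  -- conclude
  have hεA : ε ^ 2 * A = g * P - S / τ - κ * g * S := by linarith [hkey]
  have h1 : 0 ≤ w * (S / τ) := mul_nonneg hw.le (div_nonneg hSnn hτ.le)
  have h2 : 0 ≤ w * (κ * g * S) :=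
    mul_nonneg hw.le (mul_nonneg (mul_nonneg hκ hgpos.le) hSnn)
  have h3 : 0 ≤ ε ^ 2 / 2 * (w * Q) := by positivity
  have h5 : ε ^ 2 / 2 * (w * ∑ i, L.mulVec φn1 i * φn1 i)
      - ε ^ 2 / 2 * (w * ∑ i, L.mulVec φn i * φn i)
      = w * (ε ^ 2 * A) - ε ^ 2 / 2 * (w * Q) := by
    linear_combination (ε ^ 2 / 2 * w) * hdiff
  have h6 : w * (ε ^ 2 * A) = w * (g * P) - w * (S / τ) - w * (κ * g * S) := by
    linear_combination w * hεA
  linarith [h5, h6, hsn, h1, h2, h3]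
end

section
/- (MBP of sESAV1, full trajectory.) Let L : Matrix (Fin M) (Fin M) ℝ satisfy the nonlocal-stiffness sign structure: L i i ≥ 0 for all i, L i j ≤ 0 for all i ≠ j, and -L i i = ∑_{j ≠ i} L i j for all i. Let β > 0, f : ℝ → ℝ continuously differentiable on [-β,β] with f(β) ≤ 0 ≤ f(-β), κ ≥ max_{ξ∈[-β,β]} |f'(ξ)|, τ > 0 and ε ∈ ℝ. Let (φⁿ)_{n≥0} be a sequence in ℝ^M and (gⁿ)_{n≥0} a sequence of positive reals such that for every n, ((1/τ + κ gⁿ)•I + ε²•L) φⁿ⁺¹ = (1/τ + κ gⁿ) φⁿ + gⁿ f(φⁿ) with f applied componentwise. If ‖φ⁰‖_∞ ≤ β, then ‖φⁿ‖_∞ ≤ β for all n ≥ 0. -/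
open Matrix

/-- MBP of sESAV1, full trajectory: under the same hypotheses
on `L`, `f`, `κ`, if every step of the sESAV1 scheme holds with positive
scalar factors `gⁿ` and `‖φ⁰‖_∞ ≤ β`, then `‖φⁿ‖_∞ ≤ β` for all `n`. -/
theorem sESAV1_MBP_trajectory {M : ℕ} (L : Matrix (Fin M) (Fin M) ℝ)
    (hdiag : ∀ i, 0 ≤ L i i)
    (hoff : ∀ i j, i ≠ j → L i j ≤ 0)
    (hrow : ∀ i, -L i i = ∑ j ∈ Finset.univ.erase i, L i j)
    (β : ℝ) (hβ : 0 < β)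
    (f f' : ℝ → ℝ)
    (hderiv : ∀ ξ ∈ Set.Icc (-β) β,
      HasDerivWithinAt f (f' ξ) (Set.Icc (-β) β) ξ)
    (hf'cont : ContinuousOn f' (Set.Icc (-β) β))
    (hfβ : f β ≤ 0) (hfmβ : 0 ≤ f (-β))
    (κ : ℝ) (hκ : ∀ ξ ∈ Set.Icc (-β) β, |f' ξ| ≤ κ)
    (τ ε : ℝ) (hτ : 0 < τ)
    (φ : ℕ → Fin M → ℝ) (g : ℕ → ℝ) (hg : ∀ n, 0 < g n)
    (hupdate : ∀ n,
      ((1 / τ + κ * g n) • (1 : Matrix (Fin M) (Fin M) ℝ) + ε ^ 2 • L).mulVec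
          (φ (n + 1))
        = fun i => (1 / τ + κ * g n) * φ n i + g n * f (φ n i))
    (hφ0 : ‖φ 0‖ ≤ β) :
    ∀ n, ‖φ n‖ ≤ β := by
  have hβ0 : (0:ℝ) ≤ β := hβ.le
  have hβmem : β ∈ Set.Icc (-β) β := ⟨by linarith, le_refl β⟩
  have hmβmem : -β ∈ Set.Icc (-β) β := ⟨le_refl _, by linarith⟩
  have hκ0 : 0 ≤ κ := le_trans (abs_nonneg _) (hκ β hβmem)
  -- Lipschitz bound for f on [-β, β]
  have hlip : ∀ x ∈ Set.Icc (-β) β, ∀ y ∈ Set.Icc (-β) β,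
      |f y - f x| ≤ κ * |y - x| := by
    intro x hx y hy
    have := (convex_Icc (-β) β).norm_image_sub_le_of_norm_hasDerivWithin_le
      hderiv (fun ξ hξ => by simpa [Real.norm_eq_abs] using hκ ξ hξ) hx hy
    simpa [Real.norm_eq_abs] using this
  intro n
  induction n with
  | zero => exact hφ0
  | succ n ih =>
    have ihc : ∀ i, |φ n i| ≤ β := by
      intro i
      have := norm_le_pi_norm (φ n) i
      simp only [Real.norm_eq_abs] at this
      exact this.trans ih
    have hgn := hg n
    have hτ' : 0 < 1 / τ := by positivity
    have hcpos : 0 < 1 / τ + κ * g n := by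
      have : 0 ≤ κ * g n := mul_nonneg hκ0 hgn.le
      linarith
    -- scalar one-step bound
    have hscal : ∀ x ∈ Set.Icc (-β) β,
        |(1 / τ + κ * g n) * x + g n * f x| ≤ (1 / τ + κ * g n) * β := by
      intro x hx
      obtain ⟨hx1, hx2⟩ := hx
      have hfu : -(κ * (β - x)) ≤ f β - f x := by
        have := hlip x ⟨hx1, hx2⟩ β hβmem
        rw [abs_of_nonneg (by linarith : (0:ℝ) ≤ β - x)] at this
        linarith [(abs_le.mp this).1]
      have hfl : -(κ * (x - -β)) ≤ f x - f (-β) := by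
        have := hlip (-β) hmβmem x ⟨hx1, hx2⟩
        rw [abs_of_nonneg (by linarith : (0:ℝ) ≤ x - -β)] at this
        linarith [(abs_le.mp this).1]
      rw [abs_le]
      constructor
      · nlinarith [mul_le_mul_of_nonneg_left hfl hgn.le,
          mul_nonneg hgn.le hfmβ,
          mul_nonneg hτ'.le (show (0:ℝ) ≤ x + β by linarith)]
      · nlinarith [mul_le_mul_of_nonneg_left hfu hgn.le,
          mul_nonpos_of_nonneg_of_nonpos hgn.le hfβ,
          mul_nonneg hτ'.le (show (0:ℝ) ≤ β - x by linarith)]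
    -- now the vector step
    rw [pi_norm_le_iff_of_nonneg hβ0]
    intro i
    obtain ⟨i₀, -, hmax⟩ := Finset.exists_max_image Finset.univ
      (fun j => |φ (n + 1) j|) ⟨i, Finset.mem_univ i⟩
    have hmaxi : ∀ j, |φ (n + 1) j| ≤ |φ (n + 1) i₀| :=
      fun j => hmax j (Finset.mem_univ j)
    have key : |φ (n + 1) i₀| ≤ β := by
      set v : Fin M → ℝ := φ (n + 1) with hv
      set s : ℝ := if 0 ≤ v i₀ then 1 else -1 with hsdef
      have hs1 : |s| = 1 := by
        rw [hsdef]; split <;> simp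
      have hsv : s * v i₀ = |v i₀| := by
        rw [hsdef]
        split <;> rename_i h
        · rw [abs_of_nonneg h]; ring
        · rw [abs_of_neg (not_le.mp h)]; ring
      have hsvj : ∀ j, s * v j ≤ |v i₀| := by
        intro j
        calc s * v j ≤ |s * v j| := le_abs_self _
          _ = |v j| := by rw [abs_mul, hs1, one_mul]
          _ ≤ |v i₀| := hmaxi j
      -- row i₀ of the update
      have hrowEq := congrFun (hupdate n) i₀
      simp only [Matrix.add_mulVec, Matrix.smul_mulVec, Matrix.one_mulVec,
        Pi.add_apply, Pi.smul_apply, smul_eq_mul] at hrowEq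
      -- hrowEq : (1/τ + κ g) * v i₀ + ε² * (L.mulVec v) i₀ = (1/τ+κg) φn i₀ + g f(φn i₀)
      have hLv : 0 ≤ s * (L.mulVec v i₀) := by
        have hexp : s * (L.mulVec v i₀) = ∑ j, L i₀ j * (s * v j) := by
          rw [Matrix.mulVec, dotProduct, Finset.mul_sum]
          exact Finset.sum_congr rfl fun j _ => by ring
        rw [hexp, ← Finset.add_sum_erase Finset.univ _ (Finset.mem_univ i₀)]
        have h1 : ∀ j ∈ Finset.univ.erase i₀,
            L i₀ j * |v i₀| ≤ L i₀ j * (s * v j) := by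
          intro j hj
          exact mul_le_mul_of_nonpos_left (hsvj j)
            (hoff i₀ j (Finset.ne_of_mem_erase hj).symm)
        have h2 : (∑ j ∈ Finset.univ.erase i₀, L i₀ j) * |v i₀|
            ≤ ∑ j ∈ Finset.univ.erase i₀, L i₀ j * (s * v j) := by
          rw [Finset.sum_mul]
          exact Finset.sum_le_sum h1
        rw [← hrow i₀] at h2
        have h3 : L i₀ i₀ * (s * v i₀) = L i₀ i₀ * |v i₀| := by rw [hsv]
        nlinarith
      have hε2 : 0 ≤ ε ^ 2 := sq_nonneg ε
      have hmain : (1 / τ + κ * g n) * |v i₀|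
          ≤ s * ((1 / τ + κ * g n) * φ n i₀ + g n * f (φ n i₀)) := by
        have : s * ((1 / τ + κ * g n) * v i₀ + ε ^ 2 * L.mulVec v i₀)
            = (1 / τ + κ * g n) * (s * v i₀) + ε ^ 2 * (s * L.mulVec v i₀) := by ring
        rw [← hrowEq, this, hsv]
        nlinarith [mul_nonneg hε2 hLv]
      have habs : s * ((1 / τ + κ * g n) * φ n i₀ + g n * f (φ n i₀))
          ≤ (1 / τ + κ * g n) * β := by
        calc s * _ ≤ |s * ((1 / τ + κ * g n) * φ n i₀ + g n * f (φ n i₀))| :=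
              le_abs_self _
          _ = |(1 / τ + κ * g n) * φ n i₀ + g n * f (φ n i₀)| := by
              rw [abs_mul, hs1, one_mul]
          _ ≤ (1 / τ + κ * g n) * β := hscal (φ n i₀) (abs_le.mp (ihc i₀))
      have := hmain.trans habs
      exact le_of_mul_le_mul_left (by linarith [mul_comm (1 / τ + κ * g n) |v i₀|]) hcpos
    calc ‖φ (n + 1) i‖ = |φ (n + 1) i| := Real.norm_eq_abs _
      _ ≤ |φ (n + 1) i₀| := hmaxi i
      _ ≤ β := key
end

section
/- (Energy dissipation of sESAV2.) Let L : Matrix (Fin M) (Fin M) ℝ be symmetric and positive semi-definite, w > 0 a weight, ⟨u,v⟩ = w ∑_i u_i v_i the discrete inner product with norm ‖u‖ = √⟨u,u⟩, f : ℝ → ℝ, ε ∈ ℝ, τ > 0 and κ ≥ 0. Let φⁿ, φⁿ⁺¹, φ̄ ∈ ℝ^M, sⁿ, sⁿ⁺¹ ∈ ℝ and g > 0, set φ^{n+1/2} = (φⁿ⁺¹ + φⁿ)/2, and suppose the sESAV2 (Crank–Nicolson) scheme holds: (φⁿ⁺¹ - φⁿ)/τ = -ε² (L φ^{n+1/2})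 + g f(φ̄) - κ g (φ^{n+1/2} - φ̄) componentwise (f applied componentwise), and (sⁿ⁺¹ - sⁿ)/τ = -g ⟨f(φ̄), (φⁿ⁺¹-φⁿ)/τ⟩ + κ g ⟨φ^{n+1/2} - φ̄, (φⁿ⁺¹-φⁿ)/τ⟩. Then the modified discrete energy Ē_h(φ,s) = (ε²/2)⟨Lφ, φ⟩ + s satisfies Ē_h(φⁿ⁺¹, sⁿ⁺¹) ≤ Ē_h(φⁿ, sⁿ). -/
open Matrix

/-- Energy dissipation of sESAV2: the second-order
(Crank–Nicolson) sESAV scheme is unconditionally energy stable with respect to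
the modified discrete energy `Ē_h(φ,s) = (ε²/2)⟨Lφ,φ⟩ + s`, where
`⟨u,v⟩ = w ∑_i u_i v_i`. -/
theorem sESAV2_energy_dissipation {M : ℕ}
    (L : Matrix (Fin M) (Fin M) ℝ) (hL : L.PosSemidef)
    (w : ℝ) (hw : 0 < w)
    (f : ℝ → ℝ) (ε τ κ : ℝ) (hτ : 0 < τ) (hκ : 0 ≤ κ)
    (φn φn1 φbar : Fin M → ℝ) (sn sn1 : ℝ) (g : ℝ) (hg : 0 < g)
    (hscheme : ∀ i, (φn1 i - φn i) / τ =
      -(ε ^ 2) * L.mulVec (fun k => (φn1 k + φn k) / 2) i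
        + g * f (φbar i)
        - κ * g * ((φn1 i + φn i) / 2 - φbar i))
    (hsscheme : (sn1 - sn) / τ =
      -g * (w * ∑ i, f (φbar i) * ((φn1 i - φn i) / τ))
        + κ * g *
          (w * ∑ i, ((φn1 i + φn i) / 2 - φbar i) * ((φn1 i - φn i) / τ))) :
    ε ^ 2 / 2 * (w * ∑ i, L.mulVec φn1 i * φn1 i) + sn1 ≤
      ε ^ 2 / 2 * (w * ∑ i, L.mulVec φn i * φn i) + sn := by
  have hτ' : τ ≠ 0 := ne_of_gt hτ
  -- symmetry of L
  have hsymm : ∑ i, L.mulVec φn i * φn1 i = ∑ i, L.mulVec φn1 i * φn i := by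
    simp only [Matrix.mulVec, dotProduct, Finset.sum_mul]
    rw [Finset.sum_comm]
    refine Finset.sum_congr rfl fun i _ => Finset.sum_congr rfl fun j _ => ?_
    have h := congrFun (congrFun hL.1 i) j
    simp only [Matrix.conjTranspose_apply, star_trivial] at h
    rw [← h]; ring
  -- linearity of mulVec at the midpoint
  have hlin : ∀ i, L.mulVec (fun k => (φn1 k + φn k) / 2) i
      = (L.mulVec φn1 i + L.mulVec φn i) / 2 := by
    intro i
    have h : ∀ j, L i j * ((φn1 j + φn j) / 2)
        = (L i j * φn1 j + L i j * φn j) / 2 := fun j => by ring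
    simp only [Matrix.mulVec, dotProduct, h, ← Finset.sum_div,
      Finset.sum_add_distrib]
  -- midpoint sum identity
  have hsum : ∑ i, L.mulVec (fun k => (φn1 k + φn k) / 2) i * (φn1 i - φn i)
      = (∑ i, L.mulVec φn1 i * φn1 i - ∑ i, L.mulVec φn i * φn i) / 2 := by
    have h : ∀ i, L.mulVec (fun k => (φn1 k + φn k) / 2) i * (φn1 i - φn i)
        = (L.mulVec φn1 i * φn1 i - L.mulVec φn i * φn i
            + (L.mulVec φn i * φn1 i - L.mulVec φn1 i * φn i)) / 2 := by
      intro i; rw [hlin i]; ring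
    simp only [h, ← Finset.sum_div]
    rw [Finset.sum_add_distrib, Finset.sum_sub_distrib, Finset.sum_sub_distrib,
      hsymm]
    ring
  -- key scheme identity summed against the increment
  have hS : (∑ i, (φn1 i - φn i) ^ 2) / τ
      = -(ε ^ 2) * (∑ i, L.mulVec (fun k => (φn1 k + φn k) / 2) i * (φn1 i - φn i))
        + g * ∑ i, f (φbar i) * (φn1 i - φn i)
        - κ * g * ∑ i, ((φn1 i + φn i) / 2 - φbar i) * (φn1 i - φn i) := by
    rw [Finset.sum_div, Finset.mul_sum, Finset.mul_sum, Finset.mul_sum,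
      ← Finset.sum_add_distrib, ← Finset.sum_sub_distrib]
    refine Finset.sum_congr rfl fun i _ => ?_
    have h := hscheme i
    have h2 : (φn1 i - φn i) ^ 2 / τ
        = ((φn1 i - φn i) / τ) * (φn1 i - φn i) := by ring
    rw [h2, h]; ring
  -- rewrite the sums in hsscheme
  have hA : ∑ i, f (φbar i) * ((φn1 i - φn i) / τ)
      = (∑ i, f (φbar i) * (φn1 i - φn i)) / τ := by
    rw [Finset.sum_div]
    exact Finset.sum_congr rfl fun i _ => by ring
  have hB : ∑ i, ((φn1 i + φn i) / 2 - φbar i) * ((φn1 i - φn i) / τ)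
      = (∑ i, ((φn1 i + φn i) / 2 - φbar i) * (φn1 i - φn i)) / τ := by
    rw [Finset.sum_div]
    exact Finset.sum_congr rfl fun i _ => by ring
  rw [hA, hB, div_eq_iff hτ'] at hsscheme
  have hsn : sn1 - sn
      = -(g * w * ∑ i, f (φbar i) * (φn1 i - φn i))
        + κ * g * w * ∑ i, ((φn1 i + φn i) / 2 - φbar i) * (φn1 i - φn i) := by
    rw [hsscheme]; field_simp
  have hQ : 0 ≤ ∑ i, (φn1 i - φn i) ^ 2 :=
    Finset.sum_nonneg fun i _ => sq_nonneg _
  have hpos : 0 ≤ w * ((∑ i, (φn1 i - φn i) ^ 2) / τ) := by positivity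
  have key : ε ^ 2 / 2 * (w * ∑ i, L.mulVec φn1 i * φn1 i) + sn1
      - (ε ^ 2 / 2 * (w * ∑ i, L.mulVec φn i * φn i) + sn)
      = -(w * ((∑ i, (φn1 i - φn i) ^ 2) / τ)) := by
    linear_combination (-(ε ^ 2 * w)) * hsum + hsn + w * hS
  linarith [key, hpos]
end

section
/- (Exact energy decrease identity of sESAV2.) Let L : Matrix (Fin M) (Fin M) ℝ be symmetric, w > 0 a weight, ⟨u,v⟩ = w ∑_i u_i v_i the discrete inner product with norm ‖u‖ = √⟨u,u⟩, f : ℝ → ℝ, ε ∈ ℝ, τ > 0 and κ ≥ 0. Let φⁿ, φⁿ⁺¹, φ̄ ∈ ℝ^M, sⁿ, sⁿ⁺¹ ∈ ℝ and g ∈ ℝ, set φ^{n+1/2} = (φⁿ⁺¹ + φⁿ)/2, and suppose: (φⁿ⁺¹ - φⁿ)/τ = -ε² (L φ^{n+1/2}) + g f(φ̄) - κ g (φ^{n+1/2} - φ̄) componentwise, and (sⁿ⁺¹ - sⁿ)/τ = -g ⟨f(φ̄), (φⁿ⁺¹-φⁿ)/τ⟩ + κ g ⟨φ^{n+1/2}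 - φ̄, (φⁿ⁺¹-φⁿ)/τ⟩. Then, with Ē_h(φ,s) = (ε²/2)⟨Lφ, φ⟩ + s, one has the exact identity Ē_h(φⁿ⁺¹, sⁿ⁺¹) - Ē_h(φⁿ, sⁿ) = -(1/τ) ‖φⁿ⁺¹ - φⁿ‖². -/
open Matrix

/-- Exact energy decrease identity of sESAV2: for symmetric `L`,
the sESAV2 scheme satisfies the exact identity
`Ē_h(φⁿ⁺¹,sⁿ⁺¹) - Ē_h(φⁿ,sⁿ) = -(1/τ)‖φⁿ⁺¹-φⁿ‖²`, with
`Ē_h(φ,s) = (ε²/2)⟨Lφ,φ⟩ + s`, `⟨u,v⟩ = w ∑_i u_i v_i`,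
`‖u‖² = w ∑_i u_i²`. -/
theorem sESAV2_exact_energy_identity {M : ℕ}
    (L : Matrix (Fin M) (Fin M) ℝ) (hL : L.IsSymm)
    (w : ℝ) (hw : 0 < w)
    (f : ℝ → ℝ) (ε τ κ : ℝ) (hτ : 0 < τ) (hκ : 0 ≤ κ)
    (φn φn1 φbar : Fin M → ℝ) (sn sn1 : ℝ) (g : ℝ)
    (hscheme : ∀ i, (φn1 i - φn i) / τ =
      -(ε ^ 2) * L.mulVec (fun k => (φn1 k + φn k) / 2) i
        + g * f (φbar i)
        - κ * g * ((φn1 i + φn i) / 2 - φbar i))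
    (hsscheme : (sn1 - sn) / τ =
      -g * (w * ∑ i, f (φbar i) * ((φn1 i - φn i) / τ))
        + κ * g *
          (w * ∑ i, ((φn1 i + φn i) / 2 - φbar i) * ((φn1 i - φn i) / τ))) :
    (ε ^ 2 / 2 * (w * ∑ i, L.mulVec φn1 i * φn1 i) + sn1)
      - (ε ^ 2 / 2 * (w * ∑ i, L.mulVec φn i * φn i) + sn)
      = -(1 / τ) * (w * ∑ i, (φn1 i - φn i) ^ 2) := by
  have hτ0 : τ ≠ 0 := ne_of_gt hτ
  set mfun : Fin M → ℝ := fun k => (φn1 k + φn k) / 2 with hm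
  set A : ℝ := ∑ i, L.mulVec mfun i * (φn1 i - φn i) with hA
  set B : ℝ := ∑ i, f (φbar i) * (φn1 i - φn i) with hB
  set C : ℝ := ∑ i, (mfun i - φbar i) * (φn1 i - φn i) with hC
  set D : ℝ := ∑ i, (φn1 i - φn i) ^ 2 with hD
  -- symmetry of the bilinear form
  have hsym : ∀ u v : Fin M → ℝ,
      ∑ i, L.mulVec u i * v i = ∑ i, L.mulVec v i * u i := by
    intro u v
    simp only [Matrix.mulVec, dotProduct, Finset.sum_mul]
    rw [Finset.sum_comm]
    refine Finset.sum_congr rfl fun i _ => Finset.sum_congr rfl fun j _ => ?_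
    have : L j i = L i j := by
      have := hL
      rw [Matrix.IsSymm] at this
      calc L j i = L.transpose i j := rfl
        _ = L i j := by rw [this]
    rw [this]; ring
  -- linearity of mulVec at the midpoint
  have hmid : ∀ i, L.mulVec mfun i = (L.mulVec φn1 i + L.mulVec φn i) / 2 := by
    intro i
    simp only [hm, Matrix.mulVec, dotProduct]
    rw [← Finset.sum_add_distrib, Finset.sum_div]
    exact Finset.sum_congr rfl fun j _ => by ring
  -- Eq3 : the telescoping identity
  have eq3 : (∑ i, L.mulVec φn1 i * φn1 i) - (∑ i, L.mulVec φn i * φn i)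
      = 2 * A := by
    have hcross : ∑ i, L.mulVec φn1 i * φn i = ∑ i, L.mulVec φn i * φn1 i :=
      hsym φn1 φn
    have : A = (1/2) * ((∑ i, L.mulVec φn1 i * φn1 i)
        - (∑ i, L.mulVec φn i * φn i)) := by
      rw [hA]
      have : ∀ i, L.mulVec mfun i * (φn1 i - φn i)
          = (1/2) * (L.mulVec φn1 i * φn1 i - L.mulVec φn i * φn i
            - L.mulVec φn1 i * φn i + L.mulVec φn i * φn1 i) := by
        intro i; rw [hmid i]; ring
      rw [Finset.sum_congr rfl fun i _ => this i]
      rw [← Finset.mul_sum]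
      congr 1
      rw [show (fun i => L.mulVec φn1 i * φn1 i - L.mulVec φn i * φn i
            - L.mulVec φn1 i * φn i + L.mulVec φn i * φn1 i)
          = (fun i => (L.mulVec φn1 i * φn1 i - L.mulVec φn i * φn i)
            + (L.mulVec φn i * φn1 i - L.mulVec φn1 i * φn i)) from
        funext fun i => by ring]
      rw [Finset.sum_add_distrib, Finset.sum_sub_distrib, Finset.sum_sub_distrib,
        hcross]
      ring
    rw [this]; ring
  -- Eq1 : inner product of the scheme with the increment
  have eq1 : D / τ = -(ε ^ 2) * A + g * B - κ * g * C := by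
    have h1 : ∀ i, (φn1 i - φn i) / τ * (φn1 i - φn i)
        = (-(ε ^ 2) * L.mulVec mfun i + g * f (φbar i)
            - κ * g * (mfun i - φbar i)) * (φn1 i - φn i) := by
      intro i; rw [hscheme i]
    have h2 : ∑ i, (φn1 i - φn i) / τ * (φn1 i - φn i) = D / τ := by
      rw [hD, Finset.sum_div]
      exact Finset.sum_congr rfl fun i _ => by ring
    calc D / τ = ∑ i, (φn1 i - φn i) / τ * (φn1 i - φn i) := h2.symm
      _ = ∑ i, (-(ε ^ 2) * L.mulVec mfun i + g * f (φbar i)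
            - κ * g * (mfun i - φbar i)) * (φn1 i - φn i) :=
          Finset.sum_congr rfl fun i _ => h1 i
      _ = ∑ i, ((-(ε ^ 2)) * (L.mulVec mfun i * (φn1 i - φn i))
            + g * (f (φbar i) * (φn1 i - φn i))
            - κ * g * ((mfun i - φbar i) * (φn1 i - φn i))) :=
          Finset.sum_congr rfl fun i _ => by ring
      _ = -(ε ^ 2) * A + g * B - κ * g * C := by
          rw [Finset.sum_sub_distrib, Finset.sum_add_distrib, ← Finset.mul_sum,
            ← Finset.mul_sum, ← Finset.mul_sum, hA, hB, hC]
  -- Eq2 : the s-equation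
  have eq2 : sn1 - sn = -g * (w * B) + κ * g * (w * C) := by
    have hB' : ∑ i, f (φbar i) * ((φn1 i - φn i) / τ) = B / τ := by
      rw [hB, Finset.sum_div]
      exact Finset.sum_congr rfl fun i _ => by ring
    have hC' : ∑ i, ((φn1 i + φn i) / 2 - φbar i) * ((φn1 i - φn i) / τ)
        = C / τ := by
      rw [hC, Finset.sum_div]
      exact Finset.sum_congr rfl fun i _ => by rw [hm]; ring
    have h : (sn1 - sn) / τ = -g * (w * (B / τ)) + κ * g * (w * (C / τ)) := by
      rw [← hB', ← hC']; exact hsscheme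
    have h2 : (sn1 - sn) * (τ * τ)
        = (-g * (w * B) + κ * g * (w * C)) * (τ * τ) := by
      field_simp at h
      linear_combination (τ * τ) * h
    exact mul_right_cancel₀ (mul_ne_zero hτ0 hτ0) h2
  -- conclude
  linear_combination (ε ^ 2 * w / 2) * eq3 + eq2 + w * eq1
end

section
/- Let L : Matrix (Fin M) (Fin M) ℝ satisfy the nonlocal-stiffness sign structure: L i i ≥ 0 for all i, L i j ≤ 0 for all i ≠ j, and -L i i = ∑_{j ≠ i} L i j for all i. Let ε ∈ ℝ and a ∈ ℝ with a ≥ ε² L i i for all i and a ≥ 0. Then the matrix D₂ = a•I - ε²•L satisfies ‖D₂‖_∞ = a, where ‖A‖_∞ = max_i ∑_j |A i j|. -/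
open Matrix

/-- if `L` has the nonlocal-stiffness sign structure and
`a ≥ ε² L i i` for all `i` with `a ≥ 0`, then `D₂ = a•I - ε²•L` has
∞-norm (maximal absolute row sum) exactly `a`. -/
theorem sESAV2_D2_inf_norm {M : ℕ} (hM : 0 < M)
    (L : Matrix (Fin M) (Fin M) ℝ)
    (hdiag : ∀ i, 0 ≤ L i i)
    (hoff : ∀ i j, i ≠ j → L i j ≤ 0)
    (hrow : ∀ i, -L i i = ∑ j ∈ Finset.univ.erase i, L i j)
    (ε a : ℝ) (ha : ∀ i, ε ^ 2 * L i i ≤ a) (ha0 : 0 ≤ a) :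
    (⨆ i, ∑ j, |(a • (1 : Matrix (Fin M) (Fin M) ℝ) - ε ^ 2 • L) i j|) = a := by
  have key : ∀ i, ∑ j, |(a • (1 : Matrix (Fin M) (Fin M) ℝ) - ε ^ 2 • L) i j| = a := by
    intro i
    have h1 : ∀ j, (a • (1 : Matrix (Fin M) (Fin M) ℝ) - ε ^ 2 • L) i j
        = (if i = j then a else 0) - ε ^ 2 * L i j := by
      intro j
      simp [Matrix.sub_apply, Matrix.smul_apply, Matrix.one_apply, smul_eq_mul, mul_ite]
    rw [← Finset.add_sum_erase _ _ (Finset.mem_univ i)]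
    have hdiagval : |(a • (1 : Matrix (Fin M) (Fin M) ℝ) - ε ^ 2 • L) i i|
        = a - ε ^ 2 * L i i := by
      rw [h1 i, if_pos rfl, abs_of_nonneg (by linarith [ha i])]
    have hoffsum : ∑ j ∈ Finset.univ.erase i,
        |(a • (1 : Matrix (Fin M) (Fin M) ℝ) - ε ^ 2 • L) i j| = ε ^ 2 * L i i := by
      have : ∀ j ∈ Finset.univ.erase i,
          |(a • (1 : Matrix (Fin M) (Fin M) ℝ) - ε ^ 2 • L) i j| = -(ε ^ 2 * L i j) := by
        intro j hj
        have hij : i ≠ j := (Finset.ne_of_mem_erase hj).symm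
        rw [h1 j, if_neg hij, zero_sub, abs_neg,
          abs_of_nonpos (mul_nonpos_of_nonneg_of_nonpos (sq_nonneg ε) (hoff i j hij))]
      rw [Finset.sum_congr rfl this, Finset.sum_neg_distrib, ← Finset.mul_sum,
        ← hrow i]
      ring
    rw [hdiagval, hoffsum]
    ring
  haveI : Nonempty (Fin M) := ⟨⟨0, hM⟩⟩
  simp only [key]
  exact ciSup_const
end

section
/- (MBP of sESAV2, one step.) Let L : Matrix (Fin M) (Fin M) ℝ satisfy the nonlocal-stiffness sign structure: L i i ≥ 0 for all i, L i j ≤ 0 for all i ≠ j, and -L i i = ∑_{j ≠ i} L i j for all i; assume moreover L i i ≤ 2/h² for all i, where h > 0 is the mesh size. Let β > 0, f : ℝ → ℝ continuously differentiable on [-β,β] with f(β) ≤ 0 ≤ f(-β), κ ≥ max_{ξ∈[-β,β]} |f'(ξ)|, ε ∈ ℝ, G* > 0, and let g satisfy 0 < g ≤ G*. Let the time step τ > 0 satisfy τ ≤ (κ G*/2 + ε²/h²)⁻¹. If φⁿ, φ̄ ∈ ℝ^M satisfy ‖φⁿ‖_∞ ≤ β and ‖φ̄‖_∞ ≤ β,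 and φⁿ⁺¹ ∈ ℝ^M satisfies ((2/τ + κ g)•I + ε²•L) φⁿ⁺¹ = ((2/τ - κ g)•I - ε²•L) φⁿ + 2 g (f(φ̄) + κ φ̄) with f applied componentwise, then ‖φⁿ⁺¹‖_∞ ≤ β. -/
open Matrix

/-- MBP of sESAV2, one step: under the nonlocal-stiffness sign
structure with `L i i ≤ 2/h²`, the stabilization condition
`κ ≥ max_{[-β,β]}|f'|`, a bound `0 < g ≤ G*` on the scalar factor, and the
time-step restriction `τ ≤ (κG*/2 + ε²/h²)⁻¹`, the sESAV2 update
`D₁φⁿ⁺¹ = D₂φⁿ + 2g(f(φ̄)+κφ̄)` preserves `‖·‖_∞ ≤ β`.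
Here `‖·‖` on `Fin M → ℝ` is the sup-norm. -/
theorem sESAV2_MBP_one_step {M : ℕ} (L : Matrix (Fin M) (Fin M) ℝ)
    (hdiag : ∀ i, 0 ≤ L i i)
    (hoff : ∀ i j, i ≠ j → L i j ≤ 0)
    (hrow : ∀ i, -L i i = ∑ j ∈ Finset.univ.erase i, L i j)
    (h : ℝ) (hh : 0 < h) (hLdiag : ∀ i, L i i ≤ 2 / h ^ 2)
    (β : ℝ) (hβ : 0 < β)
    (f f' : ℝ → ℝ)
    (hderiv : ∀ ξ ∈ Set.Icc (-β) β,
      HasDerivWithinAt f (f' ξ) (Set.Icc (-β) β) ξ)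
    (hf'cont : ContinuousOn f' (Set.Icc (-β) β))
    (hfβ : f β ≤ 0) (hfmβ : 0 ≤ f (-β))
    (κ : ℝ) (hκ : ∀ ξ ∈ Set.Icc (-β) β, |f' ξ| ≤ κ)
    (ε Gstar g : ℝ) (hG : 0 < Gstar) (hg0 : 0 < g) (hgG : g ≤ Gstar)
    (τ : ℝ) (hτ : 0 < τ) (hτle : τ ≤ (κ * Gstar / 2 + ε ^ 2 / h ^ 2)⁻¹)
    (φn φbar φn1 : Fin M → ℝ) (hφn : ‖φn‖ ≤ β) (hφbar : ‖φbar‖ ≤ β)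
    (hupdate :
      ((2 / τ + κ * g) • (1 : Matrix (Fin M) (Fin M) ℝ) + ε ^ 2 • L).mulVec φn1
        = ((2 / τ - κ * g) • (1 : Matrix (Fin M) (Fin M) ℝ)
            - ε ^ 2 • L).mulVec φn
          + fun i => 2 * g * (f (φbar i) + κ * φbar i)) :
    ‖φn1‖ ≤ β := by
  have hε : (0:ℝ) ≤ ε ^ 2 := sq_nonneg ε
  have hκ0 : 0 ≤ κ := le_trans (abs_nonneg _) (hκ 0 ⟨by linarith, hβ.le⟩)
  -- pointwise bounds from sup norms
  have hφnb : ∀ i, |φn i| ≤ β := by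
    intro i
    have := (pi_norm_le_iff_of_nonneg hβ.le).mp hφn i
    simpa [Real.norm_eq_abs] using this
  have hφbarb : ∀ i, |φbar i| ≤ β := by
    intro i
    have := (pi_norm_le_iff_of_nonneg hβ.le).mp hφbar i
    simpa [Real.norm_eq_abs] using this
  -- time step restriction
  have hC : κ * Gstar / 2 + ε ^ 2 / h ^ 2 ≤ τ⁻¹ := by
    rcases le_or_gt (κ * Gstar / 2 + ε ^ 2 / h ^ 2) 0 with h0 | h0
    · exact h0.trans (inv_nonneg.mpr hτ.le)
    · have := inv_anti₀ hτ hτle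
      rwa [inv_inv] at this
  have hcoef : ∀ i, κ * g + ε ^ 2 * L i i ≤ 2 / τ := by
    intro i
    have h1 : κ * g ≤ κ * Gstar := mul_le_mul_of_nonneg_left hgG hκ0
    have h2 : ε ^ 2 * L i i ≤ ε ^ 2 * (2 / h ^ 2) :=
      mul_le_mul_of_nonneg_left (hLdiag i) hε
    have h3 : 2 / τ = 2 * τ⁻¹ := by ring
    rw [h3]
    have h4 : ε ^ 2 * (2 / h ^ 2) = 2 * (ε ^ 2 / h ^ 2) := by ring
    linarith
  -- monotonicity of f + κ id
  have hcont : ContinuousOn f (Set.Icc (-β) β) :=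
    fun x hx => (hderiv x hx).continuousWithinAt
  have hmono : MonotoneOn (fun x => f x + κ * x) (Set.Icc (-β) β) := by
    apply monotoneOn_of_hasDerivWithinAt_nonneg (convex_Icc _ _)
      (f' := fun x => f' x + κ)
    · exact hcont.add (continuousOn_const.mul continuousOn_id)
    · intro x hx
      rw [interior_Icc] at hx
      have h1 : HasDerivWithinAt f (f' x) (interior (Set.Icc (-β) β)) x := by
        rw [interior_Icc]
        exact (hderiv x (Set.Ioo_subset_Icc_self hx)).mono Set.Ioo_subset_Icc_self
      have h2 : HasDerivWithinAt (fun y => κ * y) κ (interior (Set.Icc (-β) β)) x := by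
        simpa using ((hasDerivAt_id x).const_mul κ).hasDerivWithinAt
      rw [interior_Icc]
      rw [interior_Icc] at h1 h2
      exact h1.add h2
    · intro x hx
      rw [interior_Icc] at hx
      have := hκ x (Set.Ioo_subset_Icc_self hx)
      have := neg_abs_le (f' x)
      linarith
  have hmem : ∀ x, |x| ≤ β → x ∈ Set.Icc (-β) β := by
    intro x hx
    exact ⟨(abs_le.mp hx).1, (abs_le.mp hx).2⟩
  have hF : ∀ x ∈ Set.Icc (-β) β, |f x + κ * x| ≤ κ * β := by
    intro x hx
    rw [abs_le]
    constructor
    · have h1 := hmono (Set.left_mem_Icc.mpr (by linarith)) hx hx.1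
      simp only at h1
      linarith
    · have h1 := hmono hx (Set.right_mem_Icc.mpr (by linarith)) hx.2
      simp only at h1
      linarith
  -- reduce to componentwise bound
  rw [pi_norm_le_iff_of_nonneg hβ.le]
  intro i0
  obtain ⟨i, -, hmax⟩ := Finset.exists_max_image Finset.univ (fun j => |φn1 j|)
    ⟨i0, Finset.mem_univ _⟩
  have hmax' : ∀ j, |φn1 j| ≤ |φn1 i| := fun j => hmax j (Finset.mem_univ j)
  set m := |φn1 i| with hm
  have hm0 : 0 ≤ m := abs_nonneg _
  -- bound on off-diagonal sums
  have hsum_bound : ∀ (v : Fin M → ℝ) (b : ℝ), (∀ j, |v j| ≤ b) →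
      |∑ j ∈ Finset.univ.erase i, L i j * v j| ≤ L i i * b := by
    intro v b hv
    calc |∑ j ∈ Finset.univ.erase i, L i j * v j|
        ≤ ∑ j ∈ Finset.univ.erase i, |L i j * v j| :=
          Finset.abs_sum_le_sum_abs _ _
      _ ≤ ∑ j ∈ Finset.univ.erase i, (-L i j) * b := by
          apply Finset.sum_le_sum
          intro j hj
          have hji : j ≠ i := Finset.ne_of_mem_erase hj
          have hLij : L i j ≤ 0 := hoff i j hji.symm
          rw [abs_mul, abs_of_nonpos hLij]
          exact mul_le_mul_of_nonneg_left (hv j) (by linarith)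
      _ = (∑ j ∈ Finset.univ.erase i, -L i j) * b := by rw [Finset.sum_mul]
      _ = L i i * b := by
          rw [Finset.sum_neg_distrib, ← hrow i]
          ring
  -- the update equation at index i
  have hupd := hupdate
  simp only [Matrix.add_mulVec, Matrix.sub_mulVec, Matrix.smul_mulVec,
    Matrix.one_mulVec] at hupd
  have key := congrFun hupd i
  simp only [Pi.add_apply, Pi.sub_apply, Pi.smul_apply, smul_eq_mul,
    Matrix.mulVec, dotProduct] at key
  have hsplit : ∀ (v : Fin M → ℝ),
      ∑ j, L i j * v j = L i i * v i + ∑ j ∈ Finset.univ.erase i, L i j * v j := by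
    intro v
    rw [← Finset.add_sum_erase _ _ (Finset.mem_univ i)]
  rw [hsplit φn1, hsplit φn] at key
  set S1 := ∑ j ∈ Finset.univ.erase i, L i j * φn1 j with hS1
  set S0 := ∑ j ∈ Finset.univ.erase i, L i j * φn j with hS0
  have hX : (2 / τ + κ * g + ε ^ 2 * L i i) * φn1 i
      = (2 / τ - κ * g - ε ^ 2 * L i i) * φn i - ε ^ 2 * S0
        + 2 * g * (f (φbar i) + κ * φbar i) - ε ^ 2 * S1 := by
    linarith [key]
  have hc1 : 0 ≤ 2 / τ - κ * g - ε ^ 2 * L i i := by linarith [hcoef i]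
  have hA0 : 0 ≤ 2 / τ + κ * g + ε ^ 2 * L i i := by
    have := mul_nonneg hε (hdiag i)
    have := mul_nonneg hκ0 hg0.le
    have : 0 < 2 / τ := by positivity
    linarith [mul_nonneg hε (hdiag i), mul_nonneg hκ0 hg0.le]
  obtain ⟨h2a, h2b⟩ := abs_le.mp (hsum_bound φn β hφnb)
  obtain ⟨h3a, h3b⟩ := abs_le.mp (hsum_bound φn1 m hmax')
  obtain ⟨h4a, h4b⟩ := abs_le.mp (hF (φbar i) (hmem _ (hφbarb i)))
  obtain ⟨h5a, h5b⟩ := abs_le.mp (hφnb i)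
  have hεS0l := mul_le_mul_of_nonneg_left h2a hε
  have hεS0r := mul_le_mul_of_nonneg_left h2b hε
  have hεS1l := mul_le_mul_of_nonneg_left h3a hε
  have hεS1r := mul_le_mul_of_nonneg_left h3b hε
  have hc1l := mul_le_mul_of_nonneg_left h5a hc1
  have hc1r := mul_le_mul_of_nonneg_left h5b hc1
  have hgF_l : 2 * g * (-(κ * β)) ≤ 2 * g * (f (φbar i) + κ * φbar i) :=
    mul_le_mul_of_nonneg_left h4a (by linarith)
  have hgF_r : 2 * g * (f (φbar i) + κ * φbar i) ≤ 2 * g * (κ * β) :=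
    mul_le_mul_of_nonneg_left h4b (by linarith)
  have hεd := mul_nonneg hε (hdiag i)
  -- bound (a + ε²d) * m
  have hkey2 : (2 / τ + κ * g + ε ^ 2 * L i i) * m
      ≤ (2 / τ - κ * g - ε ^ 2 * L i i) * β + ε ^ 2 * (L i i * β)
        + 2 * g * (κ * β) + ε ^ 2 * (L i i * m) := by
    have habs : (2 / τ + κ * g + ε ^ 2 * L i i) * m
        = |(2 / τ + κ * g + ε ^ 2 * L i i) * φn1 i| := by
      rw [abs_mul, abs_of_nonneg hA0]
    rw [habs, hX]
    rw [abs_le]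
    constructor
    · linarith
    · linarith
  have ha : 0 < 2 / τ + κ * g := by
    have h1 : 0 < 2 / τ := by positivity
    have h2 : 0 ≤ κ * g := mul_nonneg hκ0 hg0.le
    linarith
  have hmβ : m ≤ β := by
    have hmm : (2 / τ + κ * g) * m ≤ (2 / τ + κ * g) * β := by ring_nf; ring_nf at hkey2; linarith
    exact le_of_mul_le_mul_left hmm ha
  calc ‖φn1 i0‖ = |φn1 i0| := Real.norm_eq_abs _
    _ ≤ m := hmax' i0
    _ ≤ β := hmβ
end

section
/- Let L : Matrix (Fin M) (Fin M) ℝ be symmetric and positive semi-definite, w > 0 a weight, ⟨u,v⟩ = w ∑_i u_i v_i, ε ∈ ℝ, and Ē_h(φ,s) = (ε²/2)⟨Lφ,φ⟩ + s the modified discrete energy. Let (φⁿ)_{n≥0} be a sequence in ℝ^M and (sⁿ)_{n≥0} a sequence in ℝ such that Ē_h(φⁿ⁺¹, sⁿ⁺¹) ≤ Ē_h(φⁿ, sⁿ) for all n ≥ 0. Then sⁿ ≤ Ē_h(φ⁰, s⁰) for all n ≥ 0. Consequently, if F : ℝ → ℝ, C* ≥ 0 and β > 0 are such that E₁h(ω)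 := w ∑_i F(ω_i) ≥ -C* whenever ‖ω‖_∞ ≤ β, and ‖φⁿ‖_∞ ≤ β for all n, then the exponential factor g(φⁿ, sⁿ) = exp(sⁿ)/exp(E₁h(φⁿ)) satisfies 0 < g(φⁿ, sⁿ) ≤ exp(Ē_h(φ⁰, s⁰) + C*) for all n ≥ 0. -/
open Matrix

/-- Corollary 1: if the modified discrete energy
`Ē_h(φ,s) = (ε²/2)⟨Lφ,φ⟩ + s` is nonincreasing along the discrete trajectory,
then `sⁿ ≤ Ē_h(φ⁰,s⁰)` for all `n`; consequently, if `E₁h(ω) = w ∑ F(ω_i)` is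
bounded below by `-C*` on the ball `‖ω‖_∞ ≤ β` and `‖φⁿ‖_∞ ≤ β` for all `n`,
the exponential factor `g(φⁿ,sⁿ) = exp(sⁿ)/exp(E₁h(φⁿ))` satisfies
`0 < g(φⁿ,sⁿ) ≤ exp(Ē_h(φ⁰,s⁰) + C*)`.  Here `‖·‖` on `Fin M → ℝ` is the
sup-norm. -/
theorem sESAV_exponential_factor_bound {M : ℕ}
    (L : Matrix (Fin M) (Fin M) ℝ) (hL : L.PosSemidef)
    (w : ℝ) (hw : 0 < w) (ε : ℝ)
    (φ : ℕ → Fin M → ℝ) (s : ℕ → ℝ)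
    (hdec : ∀ n,
      ε ^ 2 / 2 * (w * ∑ i, L.mulVec (φ (n + 1)) i * φ (n + 1) i) + s (n + 1) ≤
        ε ^ 2 / 2 * (w * ∑ i, L.mulVec (φ n) i * φ n i) + s n) :
    (∀ n, s n ≤ ε ^ 2 / 2 * (w * ∑ i, L.mulVec (φ 0) i * φ 0 i) + s 0) ∧
    ∀ (F : ℝ → ℝ) (Cstar β : ℝ), 0 ≤ Cstar → 0 < β →
      (∀ ω : Fin M → ℝ, ‖ω‖ ≤ β → -Cstar ≤ w * ∑ i, F (ω i)) →
      (∀ n, ‖φ n‖ ≤ β) →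
      ∀ n,
        0 < Real.exp (s n) / Real.exp (w * ∑ i, F (φ n i)) ∧
        Real.exp (s n) / Real.exp (w * ∑ i, F (φ n i)) ≤
          Real.exp
            ((ε ^ 2 / 2 * (w * ∑ i, L.mulVec (φ 0) i * φ 0 i) + s 0) + Cstar) := by
  have hquad : ∀ n, 0 ≤ ε ^ 2 / 2 * (w * ∑ i, L.mulVec (φ n) i * φ n i) := by
    intro n
    have h1 : 0 ≤ ∑ i, L.mulVec (φ n) i * φ n i := by
      have := hL.dotProduct_mulVec_nonneg (φ n)
      simpa [dotProduct, mul_comm] using this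
    positivity
  have hE : ∀ n, ε ^ 2 / 2 * (w * ∑ i, L.mulVec (φ n) i * φ n i) + s n ≤
      ε ^ 2 / 2 * (w * ∑ i, L.mulVec (φ 0) i * φ 0 i) + s 0 := by
    intro n
    induction n with
    | zero => exact le_rfl
    | succ k ih => exact le_trans (hdec k) ih
  have hs : ∀ n, s n ≤ ε ^ 2 / 2 * (w * ∑ i, L.mulVec (φ 0) i * φ 0 i) + s 0 := by
    intro n
    have := hE n
    linarith [hquad n]
  refine ⟨hs, ?_⟩
  intro F Cstar β hC hβ hF hφ n
  constructor
  · positivity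
  · rw [div_le_iff₀ (Real.exp_pos _), ← Real.exp_add]
    apply Real.exp_le_exp.mpr
    have h1 := hs n
    have h2 := hF (φ n) (hφ n)
    linarith
end
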